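/- Let X₀,…,X_{n-1} be i.i.d. random variables uniform on an M-ary PSK constellation, and let Y_i = E[CF_n(s) | X₀,…,X_{i-1}] for i = 0,…,n be the Doob martingale of the crest factor. Then almost surely |Y_i − Y_{i-1}| ≤ 2/√n for every i ∈ {1,…,n}. -/

import Mathlib

open MeasureTheory Finset

noncomputable def ofdm (n : ℕ) (T : ℝ) (x : Fin n → ℂ) (t : ℝ) : ℂ :=
  ((Real.sqrt n : ℝ) : ℂ)⁻¹ *
    ∑ i : Fin n, x i * Complex.exp (Complex.I * ((2 * Real.pi * (i : ℕ) * t / T : ℝ) : ℂ))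

noncomputable def crest (n : ℕ) (T : ℝ) (x : Fin n → ℂ) : ℝ :=
  sSup ((fun t => ‖ofdm n T x t‖) '' Set.Icc (0 : ℝ) T)

/-- The uniform distribution on the M-ary PSK constellation. -/
noncomputable def pskMeasure (M : ℕ) : Measure ℂ :=
  (M : ENNReal)⁻¹ •
    ∑ l ∈ Finset.range M,
      Measure.dirac (Complex.exp (Complex.I * (((2 * l + 1) * Real.pi / M : ℝ) : ℂ)))

/-! ### Auxiliary deterministic lemmas about `crest` -/

lemma norm_exp_I_mul (r : ℝ) : ‖Complex.exp (Complex.I * (r : ℂ))‖ = 1 := by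
  rw [Complex.norm_exp]
  simp [Complex.mul_re]

lemma ofdm_sub (n : ℕ) (T : ℝ) (x y : Fin n → ℂ) (t : ℝ) :
    ofdm n T x t - ofdm n T y t = ofdm n T (x - y) t := by
  simp only [ofdm, ← mul_sub, ← Finset.sum_sub_distrib, ← sub_mul]
  rfl

lemma norm_ofdm_le (n : ℕ) (T : ℝ) (x : Fin n → ℂ) (t : ℝ) :
    ‖ofdm n T x t‖ ≤ (Real.sqrt n)⁻¹ * ∑ i, ‖x i‖ := by
  rw [ofdm, norm_mul]
  refine mul_le_mul ?_ ?_ (norm_nonneg _) (by positivity)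
  · rw [norm_inv, Complex.norm_real, Real.norm_eq_abs,
      abs_of_nonneg (Real.sqrt_nonneg _)]
  · refine (norm_sum_le _ _).trans ?_
    refine Finset.sum_le_sum fun i _ => ?_
    rw [norm_mul, norm_exp_I_mul, mul_one]

lemma crest_bddAbove (n : ℕ) (T : ℝ) (x : Fin n → ℂ) :
    BddAbove ((fun t => ‖ofdm n T x t‖) '' Set.Icc (0 : ℝ) T) := by
  refine ⟨(Real.sqrt n)⁻¹ * ∑ i, ‖x i‖, ?_⟩
  rintro v ⟨t, _, rfl⟩
  exact norm_ofdm_le n T x t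

lemma crest_nonneg {n : ℕ} {T : ℝ} (hT : 0 < T) (x : Fin n → ℂ) : 0 ≤ crest n T x :=
  le_trans (norm_nonneg (ofdm n T x 0))
    (le_csSup (crest_bddAbove n T x) ⟨0, ⟨le_rfl, hT.le⟩, rfl⟩)

lemma crest_le {n : ℕ} {T : ℝ} (hT : 0 < T) (x : Fin n → ℂ) :
    crest n T x ≤ (Real.sqrt n)⁻¹ * ∑ i, ‖x i‖ := by
  refine csSup_le ⟨‖ofdm n T x 0‖, 0, ⟨le_rfl, hT.le⟩, rfl⟩ ?_
  rintro v ⟨t, _, rfl⟩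
  exact norm_ofdm_le n T x t

lemma crest_sub_le {n : ℕ} {T : ℝ} (hT : 0 < T) (x y : Fin n → ℂ) :
    crest n T x ≤ crest n T y + (Real.sqrt n)⁻¹ * ∑ i, ‖x i - y i‖ := by
  refine csSup_le ⟨‖ofdm n T x 0‖, 0, ⟨le_rfl, hT.le⟩, rfl⟩ ?_
  rintro v ⟨t, ht, rfl⟩
  have h1 : ‖ofdm n T x t‖ - ‖ofdm n T y t‖ ≤ ‖ofdm n T x t - ofdm n T y t‖ :=
    norm_sub_norm_le _ _
  have h2 : ‖ofdm n T x t - ofdm n T y t‖ ≤ (Real.sqrt n)⁻¹ * ∑ i, ‖x i - y i‖ := by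
    rw [ofdm_sub]; exact norm_ofdm_le n T (x - y) t
  have h3 : ‖ofdm n T y t‖ ≤ crest n T y :=
    le_csSup (crest_bddAbove n T y) ⟨t, ht, rfl⟩
  linarith

lemma abs_crest_sub {n : ℕ} {T : ℝ} (hT : 0 < T) (x y : Fin n → ℂ) :
    |crest n T x - crest n T y| ≤ (Real.sqrt n)⁻¹ * ∑ i, ‖x i - y i‖ := by
  rw [abs_sub_le_iff]
  constructor
  · linarith [crest_sub_le hT x y]
  · have := crest_sub_le hT y x
    simp_rw [norm_sub_rev (y _)] at this
    linarith

lemma continuous_crest {n : ℕ} {T : ℝ} (hT : 0 < T) : Continuous (crest n T) := by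
  refine LipschitzWith.continuous (K := Real.toNNReal ((Real.sqrt n)⁻¹ * n))
    (LipschitzWith.of_dist_le_mul fun x y => ?_)
  rw [Real.dist_eq, Real.coe_toNNReal _ (by positivity)]
  refine (abs_crest_sub hT x y).trans ?_
  rw [mul_assoc]
  refine mul_le_mul_of_nonneg_left ?_ (by positivity)
  calc ∑ i, ‖x i - y i‖ ≤ ∑ _i : Fin n, dist x y :=
        Finset.sum_le_sum fun i _ => by
          rw [← dist_eq_norm]; exact dist_le_pi_dist x y i
    _ = n * dist x y := by simp [mul_comm]

lemma measurable_crest {n : ℕ} {T : ℝ} (hT : 0 < T) : Measurable (crest n T) :=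
  (continuous_crest hT).measurable

/-! ### Auxiliary lemmas about `pskMeasure` -/

noncomputable def pskPt (M l : ℕ) : ℂ :=
  Complex.exp (Complex.I * (((2 * l + 1) * Real.pi / M : ℝ) : ℂ))

lemma norm_pskPt (M l : ℕ) : ‖pskPt M l‖ = 1 := norm_exp_I_mul _

lemma isProbabilityMeasure_pskMeasure {M : ℕ} (hM : 0 < M) :
    IsProbabilityMeasure (pskMeasure M) := by
  constructor
  rw [pskMeasure, Measure.smul_apply, Measure.coe_finset_sum]
  simp only [Finset.sum_apply, Measure.dirac_apply_of_mem (Set.mem_univ _)]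
  simp only [Finset.sum_const, Finset.card_range, nsmul_eq_mul, mul_one, smul_eq_mul]
  rw [ENNReal.inv_mul_cancel (by exact_mod_cast hM.ne') (by simp)]

lemma pskMeasure_compl_zero (M : ℕ) :
    pskMeasure M ((↑((Finset.range M).image (pskPt M)) : Set ℂ)ᶜ) = 0 := by
  set S := ((Finset.range M).image (pskPt M)) with hS
  have hSm : MeasurableSet ((↑S : Set ℂ)ᶜ) := S.measurableSet.compl
  rw [pskMeasure, Measure.smul_apply, Measure.coe_finset_sum, Finset.sum_apply]
  have hz : ∀ l ∈ Finset.range M,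
      (Measure.dirac (Complex.exp (Complex.I * (((2 * l + 1) * Real.pi / M : ℝ) : ℂ))))
        ((↑S : Set ℂ)ᶜ) = 0 := by
    intro l hl
    rw [Measure.dirac_apply' _ hSm, Set.indicator_of_notMem]
    have : Complex.exp (Complex.I * (((2 * l + 1) * Real.pi / M : ℝ) : ℂ)) ∈ (↑S : Set ℂ) := by
      rw [hS]
      exact Finset.mem_coe.mpr (Finset.mem_image.mpr ⟨l, hl, rfl⟩)
    simpa using this
  rw [Finset.sum_eq_zero hz]
  simp

lemma integrable_dirac_of_stronglyMeasurable {α E : Type*} [MeasurableSpace α]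
    [MeasurableSingletonClass α] [NormedAddCommGroup E] {f : α → E}
    (hf : StronglyMeasurable f) (a : α) : Integrable f (Measure.dirac a) := by
  refine ⟨hf.aestronglyMeasurable, ?_⟩
  simp [HasFiniteIntegral, lintegral_dirac]

theorem stmt_3 {Ω : Type*} [MeasurableSpace Ω] (μ : Measure Ω) [IsProbabilityMeasure μ]
    (n M : ℕ) (hn : 0 < n) (hM : 2 ≤ M) (T : ℝ) (hT : 0 < T)
    (X : Fin n → Ω → ℂ) (hmeas : ∀ j, Measurable (X j))
    (hiid : ProbabilityTheory.iIndepFun X μ)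
    (hdist : ∀ j, Measure.map (X j) μ = pskMeasure M)
    (F : ℕ → MeasurableSpace Ω)
    (hF : ∀ i, F i = ⨆ j : Fin n, ⨆ _ : (j : ℕ) < i, MeasurableSpace.comap (X j) inferInstance)
    (Y : ℕ → Ω → ℝ)
    (hY : ∀ i, Y i = μ[(fun ω => crest n T (fun j => X j ω)) | F i]) :
    ∀ i, 1 ≤ i → i ≤ n →
      ∀ᵐ ω ∂μ, |Y i ω - Y (i - 1) ω| ≤ 2 / Real.sqrt n := by
  classical
  intro i hi1 hin
  set k : ℕ := i - 1 with hkdef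
  have hki : k + 1 = i := Nat.succ_pred_eq_of_pos hi1
  have hkn : k < n := by omega
  set k' : Fin n := ⟨k, hkn⟩ with hk'def
  have hsn : 0 < Real.sqrt n := Real.sqrt_pos.mpr (by exact_mod_cast hn)
  have hMpos : (0:ℝ) < M := by exact_mod_cast (by omega : 0 < M)
  -- basic objects
  set XX : Ω → (Fin n → ℂ) := fun ω j => X j ω with hXXdef
  set f : Ω → ℝ := (fun ω => crest n T (fun j => X j ω)) with hfdef
  set a : ℕ → ℂ := pskPt M with hadef
  set fl : ℕ → Ω → ℝ := fun l ω => crest n T (Function.update (XX ω) k' (a l)) with hfldef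
  set fbar : Ω → ℝ := fun ω => (M:ℝ)⁻¹ * ∑ l ∈ Finset.range M, fl l ω with hfbardef
  -- measurability
  have hXXm : Measurable XX := measurable_pi_lambda _ fun j => hmeas j
  have hfm : Measurable f := (measurable_crest hT).comp hXXm
  have hupd : ∀ c : ℂ, Measurable (fun x : Fin n → ℂ => Function.update x k' c) := by
    intro c
    refine measurable_pi_lambda _ fun j => ?_
    by_cases h : j = k'
    · simp only [Function.update_apply, h, if_true]
      exact measurable_const
    · simpa [Function.update_apply, h] using measurable_pi_apply j
  have hflm : ∀ l, Measurable (fl l) := fun l =>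
    (measurable_crest hT).comp ((hupd (a l)).comp hXXm)
  have hfbarm : Measurable fbar :=
    (Finset.measurable_sum _ fun l _ => hflm l).const_mul _
  -- the ambient σ-algebra facts
  have hFle : ∀ m, F m ≤ (inferInstance : MeasurableSpace Ω) := by
    intro m
    rw [hF]
    exact iSup_le fun j => iSup_le fun _ => (hmeas j).comap_le
  haveI hsfi : SigmaFinite (μ.trim (hFle i)) := by
    have : IsFiniteMeasure (μ.trim (hFle i)) := isFiniteMeasure_trim _
    infer_instance
  haveI hsfk : SigmaFinite (μ.trim (hFle k)) := by
    have : IsFiniteMeasure (μ.trim (hFle k)) := isFiniteMeasure_trim _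
    infer_instance
  -- a.e. facts: the X's take values in the PSK points
  set S : Finset ℂ := (Finset.range M).image (pskPt M) with hSdef
  have haeS : ∀ j : Fin n, ∀ᵐ ω ∂μ, X j ω ∈ (↑S : Set ℂ) := by
    intro j
    rw [ae_iff]
    have : {ω | ¬ X j ω ∈ (↑S : Set ℂ)} = X j ⁻¹' ((↑S : Set ℂ)ᶜ) := rfl
    rw [this, ← Measure.map_apply (hmeas j) S.measurableSet.compl, hdist j]
    exact pskMeasure_compl_zero M
  have hnorm : ∀ᵐ ω ∂μ, ∀ j, ‖X j ω‖ = 1 := by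
    filter_upwards [ae_all_iff.mpr haeS] with ω h j
    have hj : X j ω ∈ S := Finset.mem_coe.mp (h j)
    rw [hSdef] at hj
    obtain ⟨l, _, hl⟩ := Finset.mem_image.mp hj
    rw [← hl]
    exact norm_pskPt M l
  -- integrability
  have hfInt : Integrable f μ := by
    refine Integrable.mono' (integrable_const ((Real.sqrt n)⁻¹ * n))
      hfm.aestronglyMeasurable ?_
    filter_upwards [hnorm] with ω h
    rw [Real.norm_eq_abs, abs_of_nonneg (crest_nonneg hT _)]
    refine (crest_le hT _).trans ?_
    refine mul_le_mul_of_nonneg_left (le_of_eq ?_) (by positivity)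
    rw [Finset.sum_congr rfl fun j _ => h j]
    simp
  have hflInt : ∀ l, Integrable (fl l) μ := by
    intro l
    refine Integrable.mono' (integrable_const ((Real.sqrt n)⁻¹ * n))
      (hflm l).aestronglyMeasurable ?_
    filter_upwards [hnorm] with ω h
    rw [Real.norm_eq_abs, abs_of_nonneg (crest_nonneg hT _)]
    refine (crest_le hT _).trans ?_
    refine mul_le_mul_of_nonneg_left ?_ (by positivity)
    have hstep : ∑ j, ‖Function.update (XX ω) k' (a l) j‖ ≤ ∑ _j : Fin n, (1:ℝ) := by
      refine Finset.sum_le_sum fun j _ => ?_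
      by_cases hj : j = k'
      · rw [hj, Function.update_self, hadef, norm_pskPt]
      · rw [Function.update_of_ne hj]
        exact le_of_eq (h j)
    refine hstep.trans (le_of_eq ?_)
    simp
  have hfbarInt : Integrable fbar μ :=
    (integrable_finset_sum _ fun l _ => hflInt l).const_mul _
  -- the a.e. bound |f - fbar| ≤ 2/√n
  have honediff : ∀ ω l, ‖X k' ω‖ = 1 →
      |f ω - fl l ω| ≤ (Real.sqrt n)⁻¹ * 2 := by
    intro ω l h1
    have h2 : |f ω - fl l ω| ≤
        (Real.sqrt n)⁻¹ * ∑ j, ‖XX ω j - Function.update (XX ω) k' (a l) j‖ :=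
      abs_crest_sub hT _ _
    have h3 : ∑ j, ‖XX ω j - Function.update (XX ω) k' (a l) j‖ = ‖X k' ω - a l‖ := by
      rw [Finset.sum_eq_single k']
      · rw [Function.update_self]
      · intro j _ hj
        rw [Function.update_of_ne hj, sub_self, norm_zero]
      · intro hj; exact absurd (Finset.mem_univ k') hj
    have h4 : ‖X k' ω - a l‖ ≤ 2 := by
      refine (norm_sub_le _ _).trans ?_
      rw [h1, hadef, norm_pskPt]; norm_num
    refine h2.trans ?_
    rw [h3]
    exact mul_le_mul_of_nonneg_left h4 (by positivity)
  have hdiff : ∀ᵐ ω ∂μ, |f ω - fbar ω| ≤ 2 / Real.sqrt n := by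
    filter_upwards [hnorm] with ω h
    have hfw : f ω - fbar ω = (M:ℝ)⁻¹ * ∑ l ∈ Finset.range M, (f ω - fl l ω) := by
      rw [Finset.sum_sub_distrib, mul_sub, hfbardef]
      rw [Finset.sum_const, Finset.card_range, nsmul_eq_mul]
      field_simp
    rw [hfw, abs_mul, abs_of_nonneg (by positivity : (0:ℝ) ≤ (M:ℝ)⁻¹)]
    calc (M:ℝ)⁻¹ * |∑ l ∈ Finset.range M, (f ω - fl l ω)|
        ≤ (M:ℝ)⁻¹ * ∑ l ∈ Finset.range M, |f ω - fl l ω| := by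
          refine mul_le_mul_of_nonneg_left (Finset.abs_sum_le_sum_abs _ _) (by positivity)
      _ ≤ (M:ℝ)⁻¹ * ∑ _l ∈ Finset.range M, ((Real.sqrt n)⁻¹ * 2) := by
          refine mul_le_mul_of_nonneg_left
            (Finset.sum_le_sum fun l _ => honediff ω l (h k')) (by positivity)
      _ = 2 / Real.sqrt n := by
          rw [Finset.sum_const, Finset.card_range, nsmul_eq_mul]
          field_simp
  -- independence setup
  set S' : Finset (Fin n) := Finset.univ.erase k' with hS'def
  set RS : Ω → ((j : ↥S') → ℂ) := fun ω j => X j ω with hRSdef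
  set RT : Ω → ((j : ↥({k'} : Finset (Fin n))) → ℂ) := fun ω j => X j ω with hRTdef
  have hRSm : Measurable RS := measurable_pi_lambda _ fun j => hmeas j
  have hIndepST : ProbabilityTheory.IndepFun RS RT μ :=
    hiid.indepFun_finset S' {k'}
      (Finset.disjoint_singleton_right.mpr (Finset.notMem_erase k' Finset.univ)) hmeas
  have hIndepST' : ProbabilityTheory.Indep (MeasurableSpace.comap RS inferInstance)
      (MeasurableSpace.comap RT inferInstance) μ := hIndepST
  have hXk'comap : MeasurableSpace.comap (X k') inferInstance ≤
      MeasurableSpace.comap RT inferInstance := by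
    have hXk'eq : X k' = (fun v : ((j : ↥({k'} : Finset (Fin n))) → ℂ) =>
        v ⟨k', Finset.mem_singleton_self k'⟩) ∘ RT := rfl
    rw [hXk'eq, ← MeasurableSpace.comap_comp]
    exact MeasurableSpace.comap_mono (measurable_pi_apply _).comap_le
  have hIndepG : ProbabilityTheory.Indep (MeasurableSpace.comap RS inferInstance)
      (MeasurableSpace.comap (X k') inferInstance) μ :=
    ProbabilityTheory.indep_of_indep_of_le_right hIndepST' hXk'comap
  have hFk_le_mS : F k ≤ MeasurableSpace.comap RS inferInstance := by
    rw [hF]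
    refine iSup_le fun j => iSup_le fun hj => ?_
    have hjS : j ∈ S' := Finset.mem_erase.mpr
      ⟨by intro e; rw [e] at hj; simp [hk'def] at hj, Finset.mem_univ j⟩
    have : X j = (fun v : ((j : ↥S') → ℂ) => v ⟨j, hjS⟩) ∘ RS := rfl
    rw [this, ← MeasurableSpace.comap_comp]
    exact MeasurableSpace.comap_mono (measurable_pi_apply _).comap_le
  have hFi_eq : F i = F k ⊔ MeasurableSpace.comap (X k') inferInstance := by
    rw [hF i, hF k]
    apply le_antisymm
    · refine iSup_le fun j => iSup_le fun hj => ?_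
      rcases lt_or_ge (j : ℕ) k with h | h
      · exact le_sup_of_le_left (le_iSup_of_le j (le_iSup_of_le h le_rfl))
      · have : j = k' := Fin.ext (show (j : ℕ) = k by omega)
        rw [this]
        exact le_sup_right
    · refine sup_le ?_ ?_
      · refine iSup_le fun j => iSup_le fun hj => ?_
        exact le_iSup_of_le j (le_iSup_of_le (by omega) le_rfl)
      · exact le_iSup_of_le k' (le_iSup_of_le (show ((k' : Fin n) : ℕ) < i from by show k < i; omega) le_rfl)
  have hFkFi : F k ≤ F i := by
    rw [hFi_eq]; exact le_sup_left
  -- combine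
  set combine : ((j : ↥S') → ℂ) → ℂ → (Fin n → ℂ) := fun r c j =>
    if h : j = k' then c else r ⟨j, Finset.mem_erase.mpr ⟨h, Finset.mem_univ j⟩⟩
    with hcombdef
  have hcomb1 : ∀ ω c, combine (RS ω) c = Function.update (XX ω) k' c := by
    intro ω c
    funext j
    by_cases h : j = k'
    · rw [h]; simp [hcombdef, Function.update_self]
    · simp [hcombdef, h, Function.update_of_ne h, hRSdef, hXXdef]
  have hcomb2 : ∀ ω, combine (RS ω) (X k' ω) = XX ω := by
    intro ω
    rw [hcomb1]
    funext j
    by_cases h : j = k'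
    · rw [h, Function.update_self]
    · rw [Function.update_of_ne h]
  have hcombm : Measurable (fun p : ((j : ↥S') → ℂ) × ℂ => combine p.1 p.2) := by
    refine measurable_pi_lambda _ fun j => ?_
    by_cases h : j = k'
    · simp only [hcombdef, h, dif_pos]
      exact measurable_snd
    · simp only [hcombdef, h, dif_neg, not_false_iff]
      exact (measurable_pi_apply _).comp measurable_fst
  haveI : IsProbabilityMeasure (pskMeasure M) := isProbabilityMeasure_pskMeasure (by omega)
  -- the freezing identity
  have hfreeze : ∀ A : Set Ω, MeasurableSet[MeasurableSpace.comap RS inferInstance] A →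
      ∫ ω in A, f ω ∂μ = ∫ ω in A, fbar ω ∂μ := by
    intro A hA
    obtain ⟨A', hA', rfl⟩ := hA
    set H : ((j : ↥S') → ℂ) × ℂ → ℝ := fun p =>
      Set.indicator A' (fun _ => (1:ℝ)) p.1 * crest n T (combine p.1 p.2) with hHdef
    have hHm : Measurable H :=
      ((measurable_const.indicator hA').comp measurable_fst).mul
        ((measurable_crest hT).comp hcombm)
    have hAm0 : MeasurableSet (RS ⁻¹' A') := hRSm hA'
    have hindpt : ∀ (g : Ω → ℝ) (ω : Ω),
        Set.indicator A' (fun _ => (1:ℝ)) (RS ω) * g ω = (RS ⁻¹' A').indicator g ω := by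
      intro g ω
      simp only [Set.indicator_apply, Set.mem_preimage]
      by_cases h : RS ω ∈ A' <;> simp [h]
    have hpairm : Measurable (fun ω => (RS ω, X k' ω)) := hRSm.prodMk (hmeas k')
    have hIndepXk : ProbabilityTheory.IndepFun RS (X k') μ := by
      have hXk'c : X k' = (fun v : ((j : ↥({k'} : Finset (Fin n))) → ℂ) =>
          v ⟨k', Finset.mem_singleton_self k'⟩) ∘ RT := rfl
      rw [hXk'c]
      exact hIndepST.comp measurable_id (measurable_pi_apply _)
    have hlaw : μ.map (fun ω => (RS ω, X k' ω)) = (μ.map RS).prod (pskMeasure M) := by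
      rw [← hdist k']
      exact (ProbabilityTheory.indepFun_iff_map_prod_eq_prod_map_map
        hRSm.aemeasurable (hmeas k').aemeasurable).mp hIndepXk
    have hHpair : ∀ ω, H (RS ω, X k' ω) = (RS ⁻¹' A').indicator f ω := by
      intro ω
      rw [hHdef]
      simp only
      rw [hcomb2, hindpt f ω]
    have hHl : ∀ (l : ℕ) (ω : Ω), H (RS ω, a l) = (RS ⁻¹' A').indicator (fl l) ω := by
      intro l ω
      rw [hHdef]
      simp only
      rw [hcomb1, hindpt (fl l) ω]
    have hintf : Integrable ((RS ⁻¹' A').indicator f) μ := hfInt.indicator hAm0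
    have hintfl : ∀ l, Integrable ((RS ⁻¹' A').indicator (fl l)) μ :=
      fun l => (hflInt l).indicator hAm0
    have hIntH : Integrable H ((μ.map RS).prod (pskMeasure M)) := by
      rw [← hlaw]
      rw [integrable_map_measure hHm.aestronglyMeasurable hpairm.aemeasurable]
      have : H ∘ (fun ω => (RS ω, X k' ω)) = (RS ⁻¹' A').indicator f := funext hHpair
      rw [this]
      exact hintf
    have hIntHl : ∀ l, Integrable (fun r => H (r, a l)) (μ.map RS) := by
      intro l
      have hm : Measurable (fun r => H (r, a l)) :=
        hHm.comp (measurable_id.prodMk measurable_const)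
      rw [integrable_map_measure hm.aestronglyMeasurable hRSm.aemeasurable]
      have : (fun r => H (r, a l)) ∘ RS = (RS ⁻¹' A').indicator (fl l) :=
        funext fun ω => hHl l ω
      rw [this]
      exact hintfl l
    calc ∫ ω in RS ⁻¹' A', f ω ∂μ
        = ∫ ω, (RS ⁻¹' A').indicator f ω ∂μ := (integral_indicator hAm0).symm
      _ = ∫ ω, H (RS ω, X k' ω) ∂μ :=
          integral_congr_ae (Filter.Eventually.of_forall fun ω => (hHpair ω).symm)
      _ = ∫ p, H p ∂((μ.map RS).prod (pskMeasure M)) := by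
          rw [← hlaw, integral_map hpairm.aemeasurable hHm.aestronglyMeasurable]
      _ = ∫ r, ∫ c, H (r, c) ∂(pskMeasure M) ∂(μ.map RS) := integral_prod H hIntH
      _ = ∫ r, (M:ℝ)⁻¹ * ∑ l ∈ Finset.range M, H (r, a l) ∂(μ.map RS) := by
          refine integral_congr_ae (Filter.Eventually.of_forall fun r => ?_)
          show ∫ c, H (r, c) ∂(pskMeasure M) = (M:ℝ)⁻¹ * ∑ l ∈ Finset.range M, H (r, a l)
          have hmr : StronglyMeasurable (fun c => H (r, c)) :=
            (hHm.comp (measurable_const.prodMk measurable_id)).stronglyMeasurable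
          have hnu : pskMeasure M =
              (M : ENNReal)⁻¹ • ∑ l ∈ Finset.range M, Measure.dirac (a l) := rfl
          rw [hnu, integral_smul_measure, integral_finset_sum_measure
            (fun l _ => integrable_dirac_of_stronglyMeasurable hmr _)]
          rw [ENNReal.toReal_inv, ENNReal.toReal_natCast, smul_eq_mul]
          congr 1
          exact Finset.sum_congr rfl fun l _ => integral_dirac _ _
      _ = (M:ℝ)⁻¹ * ∑ l ∈ Finset.range M, ∫ r, H (r, a l) ∂(μ.map RS) := by
          rw [integral_const_mul]
          congr 1
          exact integral_finset_sum _ fun l _ => hIntHl l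
      _ = (M:ℝ)⁻¹ * ∑ l ∈ Finset.range M, ∫ ω in RS ⁻¹' A', fl l ω ∂μ := by
          congr 1
          refine Finset.sum_congr rfl fun l _ => ?_
          have hm : Measurable (fun r => H (r, a l)) :=
            hHm.comp (measurable_id.prodMk measurable_const)
          rw [integral_map hRSm.aemeasurable hm.aestronglyMeasurable]
          rw [show (fun ω => H (RS ω, a l)) = (RS ⁻¹' A').indicator (fl l) from
            funext fun ω => hHl l ω]
          exact integral_indicator hAm0
      _ = ∫ ω in RS ⁻¹' A', fbar ω ∂μ := by
          rw [hfbardef]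
          rw [integral_const_mul]
          congr 1
          exact (integral_finset_sum _ fun l _ => (hflInt l).integrableOn).symm
  -- total integral equality
  have htot : ∫ ω, fbar ω ∂μ = ∫ ω, (μ[f|F k]) ω ∂μ := by
    have h1 : ∫ ω, f ω ∂μ = ∫ ω, fbar ω ∂μ := by
      have := hfreeze Set.univ MeasurableSet.univ
      simpa [Measure.restrict_univ] using this
    rw [← h1, integral_condExp (hFle k)]
  -- the key conditional expectation identity
  have hmain : μ[fbar|F i] =ᵐ[μ] μ[f|F k] := by
    symm
    refine ae_eq_condExp_of_forall_setIntegral_eq (hFle i) hfbarInt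
      (fun s _ _ => integrable_condExp.integrableOn) ?_
      (StronglyMeasurable.aestronglyMeasurable (stronglyMeasurable_condExp.mono hFkFi))
    intro s hs _
    -- π-system induction
    set p : Set (Set Ω) := {s | ∃ A B, MeasurableSet[F k] A ∧
      MeasurableSet[MeasurableSpace.comap (X k') inferInstance] B ∧ s = A ∩ B} with hpdef
    have hgen : F i = MeasurableSpace.generateFrom p := by
      rw [hFi_eq]
      apply le_antisymm
      · refine sup_le ?_ ?_
        · intro t ht
          exact MeasurableSpace.measurableSet_generateFrom
            ⟨t, Set.univ, ht, MeasurableSet.univ, (Set.inter_univ t).symm⟩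
        · intro t ht
          exact MeasurableSpace.measurableSet_generateFrom
            ⟨Set.univ, t, MeasurableSet.univ, ht, (Set.univ_inter t).symm⟩
      · refine MeasurableSpace.generateFrom_le ?_
        rintro t ⟨A, B, hA, hB, rfl⟩
        exact MeasurableSet.inter
          ((show F k ≤ F k ⊔ _ from le_sup_left) A hA)
          ((show MeasurableSpace.comap (X k') inferInstance ≤ F k ⊔ _ from le_sup_right) B hB)
    have hpi : IsPiSystem p := by
      rintro s₁ ⟨A₁, B₁, hA₁, hB₁, rfl⟩ s₂ ⟨A₂, B₂, hA₂, hB₂, rfl⟩ _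
      exact ⟨A₁ ∩ A₂, B₁ ∩ B₂, hA₁.inter hA₂, hB₁.inter hB₂, by
        ext ω; simp only [Set.mem_inter_iff]; tauto⟩
    have hcondInt : Integrable (μ[f|F k]) μ := integrable_condExp
    -- the goal for all s
    have key : ∀ t, MeasurableSet[F i] t →
        ∫ x in t, (μ[f|F k]) x ∂μ = ∫ x in t, fbar x ∂μ := by
      refine @MeasurableSpace.induction_on_inter Ω (F i)
        (fun t _ => ∫ x in t, (μ[f|F k]) x ∂μ = ∫ x in t, fbar x ∂μ) p
        hgen hpi ?_ ?_ ?_ ?_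
      · simp
      · rintro t ⟨A, B, hA, hB, rfl⟩
        -- product structure
        have hAm0 : MeasurableSet A := hFle k A hA
        have hBm0 : MeasurableSet B := (hmeas k').comap_le B hB
        have hprod : ∀ g : Ω → ℝ, (A ∩ B).indicator g =
            fun ω => A.indicator g ω * B.indicator (fun _ => (1:ℝ)) ω := by
          intro g
          funext ω
          by_cases h1 : ω ∈ A <;> by_cases h2 : ω ∈ B <;>
            simp [Set.indicator_apply, h1, h2]
        have hgeneral : ∀ g : Ω → ℝ, Integrable g μ →
            Measurable[MeasurableSpace.comap RS inferInstance] g →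
            ∫ x in A ∩ B, g x ∂μ = (∫ x in A, g x ∂μ) * (μ B).toReal := by
          intro g hgInt hgmS
          have hiAB : ∫ x in A ∩ B, g x ∂μ =
              ∫ ω, A.indicator g ω * B.indicator (fun _ => (1:ℝ)) ω ∂μ := by
            rw [← integral_indicator (hAm0.inter hBm0), hprod g]
          rw [hiAB]
          have hu : Measurable[MeasurableSpace.comap RS inferInstance] (A.indicator g) :=
            hgmS.indicator (hFk_le_mS A hA)
          have hv : Measurable[MeasurableSpace.comap (X k') inferInstance]
              (B.indicator (fun _ => (1:ℝ))) :=
            measurable_const.indicator hB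
          have hIF : ProbabilityTheory.IndepFun (A.indicator g)
              (B.indicator (fun _ => (1:ℝ))) μ :=
            ProbabilityTheory.indep_of_indep_of_le_left
              (ProbabilityTheory.indep_of_indep_of_le_right hIndepG hv.comap_le)
              hu.comap_le
          have hmul := ProbabilityTheory.IndepFun.integral_mul_eq_mul_integral hIF
            ((hu.mono hRSm.comap_le le_rfl).aestronglyMeasurable)
            ((measurable_const.indicator hBm0).aestronglyMeasurable)
          simp only [Pi.mul_apply] at hmul
          rw [hmul]
          rw [integral_indicator hAm0, integral_indicator hBm0, setIntegral_const,
            smul_eq_mul, mul_one, Measure.real]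
        -- measurability of fbar w.r.t. comap RS
        set φ : ((j : ↥S') → ℂ) → ℝ := fun r =>
          (M:ℝ)⁻¹ * ∑ l ∈ Finset.range M, crest n T (combine r (a l)) with hφdef
        have hφm : Measurable φ :=
          (Finset.measurable_sum _ fun l _ => (measurable_crest hT).comp
            (hcombm.comp (measurable_id.prodMk measurable_const))).const_mul _
        have hfbar_eq : fbar = φ ∘ RS := by
          funext ω
          simp only [hφdef, Function.comp_apply, hfbardef]
          congr 1
          exact Finset.sum_congr rfl fun l _ => by rw [hcomb1]
        have hfbarmS : Measurable[MeasurableSpace.comap RS inferInstance] fbar := by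
          rw [hfbar_eq]
          exact hφm.comp (Measurable.of_comap_le le_rfl)
        have hcondmS : Measurable[MeasurableSpace.comap RS inferInstance] (μ[f|F k]) :=
          stronglyMeasurable_condExp.measurable.mono hFk_le_mS le_rfl
        rw [hgeneral _ hcondInt hcondmS, hgeneral _ hfbarInt hfbarmS]
        have h1 : ∫ x in A, (μ[f|F k]) x ∂μ = ∫ x in A, f x ∂μ :=
          setIntegral_condExp (hFle k) hfInt hA
        have h2 : ∫ x in A, f x ∂μ = ∫ x in A, fbar x ∂μ := hfreeze A (hFk_le_mS A hA)
        rw [h1, h2]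
      · intro t htm htC
        have ht0 : MeasurableSet t := hFle i t htm
        have h1 := integral_add_compl ht0 hcondInt
        have h2 := integral_add_compl ht0 hfbarInt
        have := htot
        linarith
      · intro g hd hgm hgC
        rw [integral_iUnion (fun j => hFle i _ (hgm j)) hd hcondInt.integrableOn,
          integral_iUnion (fun j => hFle i _ (hgm j)) hd hfbarInt.integrableOn]
        exact tsum_congr hgC
    exact key s hs
  -- conclusion
  have hsub : μ[f - fbar|F i] =ᵐ[μ] μ[f|F i] - μ[fbar|F i] := condExp_sub hfInt hfbarInt (F i)
  set R : NNReal := Real.toNNReal (2 / Real.sqrt n) with hRdef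
  have hRcoe : (R : ℝ) = 2 / Real.sqrt n := Real.coe_toNNReal _ (by positivity)
  have hbdd : ∀ᵐ ω ∂μ, |(f - fbar) ω| ≤ (R : ℝ) := by
    filter_upwards [hdiff] with ω h
    rw [hRcoe]
    exact h
  have hcond := ae_bdd_condExp_of_ae_bdd (m := F i) (μ := μ) hbdd
  have hYi : Y i = μ[f|F i] := hY i
  have hYk : Y k = μ[f|F k] := hY k
  filter_upwards [hcond, hsub, hmain] with ω h1 h2 h3
  rw [hYi, hYk, ← h3]
  have : (μ[f|F i]) ω - (μ[fbar|F i]) ω = (μ[f - fbar|F i]) ω := by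
    rw [h2]; rfl
  rw [this]
  rw [hRcoe] at h1
  exact h1
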